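/- Let G be a finite simple graph that is {diamond, K2 ∪ 2K1}-free and such that both G and its complement Ḡ are connected. If U is a homogeneous set of G that contains two adjacent vertices, then the complement Ḡ is bipartite; equivalently, the vertex set of G can be partitioned into two cliques. -/

import Mathlib

open SimpleGraph

/-- `G` is `H`-free: no induced subgraph of `G` is isomorphic to `H`
(an induced copy is a graph embedding). -/
def InducedFree {α β : Type*} (H : SimpleGraph β) (G : SimpleGraph α) : Prop :=
  ¬ Nonempty (H ↪g G)

/-- The diamond: `K4` minus the edge `2-3`. -/
def diamond : SimpleGraph (Fin 4) :=
  fromEdgeSet {s(0,1), s(0,2), s(0,3), s(1,2), s(1,3)}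

/-- `K2 ∪ 2K1`: one edge `0-1` together with two isolated vertices `2,3`
(the complement of the diamond). -/
def K2u2K1 : SimpleGraph (Fin 4) := fromEdgeSet {s(0,1)}

/-- `U` is a homogeneous set of `G`: `2 ≤ |U| ≤ |V| − 1` and every vertex
outside `U` is adjacent to all of `U` or to none of `U`. -/
def IsHomogeneousSet {V : Type*} [Fintype V] (G : SimpleGraph V) (U : Set V) : Prop :=
  2 ≤ U.ncard ∧ U.ncard ≤ Fintype.card V - 1 ∧
    ∀ v ∉ U, (∀ u ∈ U, G.Adj v u) ∨ (∀ u ∈ U, ¬ G.Adj v u)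

/-- `G` is bipartite: its vertex set can be partitioned into two independent sets. -/
def IsBipartite {V : Type*} (G : SimpleGraph V) : Prop :=
  ∃ A : Set V, ∀ u v : V, G.Adj u v → ((u ∈ A ∧ v ∉ A) ∨ (u ∉ A ∧ v ∈ A))

/-- If a diamond-free graph contains an edge `a-b` with common neighbours `c,d`
that are distinct and non-adjacent, we get a contradiction. -/
lemma diamond_apply {V : Type*} {G : SimpleGraph V} (h : InducedFree diamond G)
    {a b c d : V} (hab : G.Adj a b) (hac : G.Adj a c) (had : G.Adj a d)
    (hbc : G.Adj b c) (hbd : G.Adj b d) (hcd : ¬ G.Adj c d) (hcd' : c ≠ d) : False := by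
  apply h
  have h1 : a ≠ b := hab.ne
  have h2 : a ≠ c := hac.ne
  have h3 : a ≠ d := had.ne
  have h4 : b ≠ c := hbc.ne
  have h5 : b ≠ d := hbd.ne
  have h1' := h1.symm; have h2' := h2.symm; have h3' := h3.symm
  have h4' := h4.symm; have h5' := h5.symm; have h6' := hcd'.symm
  have e1 := hab.symm; have e2 := hac.symm; have e3 := had.symm
  have e4 := hbc.symm; have e5 := hbd.symm
  have n1 : ¬ G.Adj d c := fun h => hcd h.symm
  refine ⟨⟨⟨![a,b,c,d], ?_⟩, ?_⟩⟩
  · intro i j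
    fin_cases i <;> fin_cases j <;> simp_all
  · intro i j
    show G.Adj (![a,b,c,d] i) (![a,b,c,d] j) ↔ diamond.Adj i j
    fin_cases i <;> fin_cases j <;>
      simp [diamond, G.irrefl, hab, hac, had, hbc, hbd, hcd, e1, e2, e3, e4, e5, n1]

/-- If a `K2 ∪ 2K1`-free graph contains an edge `a-b` and two further vertices
`c,d` with no adjacencies among `{a,b,c,d}` besides `a-b`, contradiction. -/
lemma k2u2k1_apply {V : Type*} {G : SimpleGraph V} (h : InducedFree K2u2K1 G)
    {a b c d : V} (hab : G.Adj a b) (hac : ¬G.Adj a c) (had : ¬G.Adj a d)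
    (hbc : ¬G.Adj b c) (hbd : ¬G.Adj b d) (hcd : ¬ G.Adj c d)
    (nac : a ≠ c) (nad : a ≠ d) (nbc : b ≠ c) (nbd : b ≠ d) (ncd : c ≠ d) : False := by
  apply h
  have h1 : a ≠ b := hab.ne
  have h1' := h1.symm; have n2' := nac.symm; have n3' := nad.symm
  have n4' := nbc.symm; have n5' := nbd.symm; have n6' := ncd.symm
  have e1 := hab.symm
  have m1 : ¬ G.Adj c a := fun h => hac h.symm
  have m2 : ¬ G.Adj d a := fun h => had h.symm
  have m3 : ¬ G.Adj c b := fun h => hbc h.symm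
  have m4 : ¬ G.Adj d b := fun h => hbd h.symm
  have m5 : ¬ G.Adj d c := fun h => hcd h.symm
  refine ⟨⟨⟨![a,b,c,d], ?_⟩, ?_⟩⟩
  · intro i j
    fin_cases i <;> fin_cases j <;> simp_all
  · intro i j
    show G.Adj (![a,b,c,d] i) (![a,b,c,d] j) ↔ K2u2K1.Adj i j
    fin_cases i <;> fin_cases j <;>
      simp [K2u2K1, G.irrefl, hab, e1, hac, had, hbc, hbd, hcd, m1, m2, m3, m4, m5]

/-- A walk starting in `W` and ending outside `W` uses an edge leaving `W`. -/
lemma walk_cross {V : Type*} (G : SimpleGraph V) (W : Set V) :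
    ∀ {a b : V}, G.Walk a b → a ∈ W → b ∉ W →
      ∃ u ∈ W, ∃ v, v ∉ W ∧ G.Adj u v := by
  intro a b p
  induction p with
  | nil => intro ha hb; exact absurd ha hb
  | @cons u v w h p ih =>
    intro ha hb
    by_cases hv : v ∈ W
    · exact ih hv hb
    · exact ⟨u, ha, v, hv, h⟩

theorem diamond_codiamond_free_homogeneous_clique {V : Type*} [Fintype V]
    (G : SimpleGraph V) (hconn : G.Connected) (hcoconn : Gᶜ.Connected)
    (hdiamond : InducedFree diamond G) (hcodiamond : InducedFree K2u2K1 G)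
    (U : Set V) (hU : IsHomogeneousSet G U)
    (hadj : ∃ x ∈ U, ∃ y ∈ U, G.Adj x y) :
    _root_.IsBipartite Gᶜ := by
  obtain ⟨x, hxU, y, hyU, hxy⟩ := hadj
  obtain ⟨-, hcard, hclass⟩ := hU
  -- there is a vertex outside U
  have hout : ∃ v, v ∉ U := by
    by_contra h
    push_neg at h
    have hu : U = Set.univ := Set.eq_univ_iff_forall.2 h
    rw [hu, Set.ncard_univ] at hcard
    have h1 : 1 ≤ Fintype.card V := Fintype.card_pos_iff.2 ⟨x⟩
    have h2 : Nat.card V = Fintype.card V := Nat.card_eq_fintype_card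
    omega
  obtain ⟨v0, hv0⟩ := hout
  -- T is nonempty: a vertex outside U adjacent to all of U
  obtain ⟨t, htU, ht⟩ : ∃ t, t ∉ U ∧ ∀ u ∈ U, G.Adj t u := by
    obtain ⟨p⟩ := hconn.preconnected x v0
    obtain ⟨a, haU, b, hbU, hab⟩ := walk_cross G U p hxU hv0
    rcases hclass b hbU with hall | hnone
    · exact ⟨b, hbU, hall⟩
    · exact absurd hab.symm (hnone a haU)
  -- S is nonempty: a vertex outside U adjacent to nothing in U
  obtain ⟨s, hsU, hs⟩ : ∃ s, s ∉ U ∧ ∀ u ∈ U, ¬ G.Adj s u := by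
    obtain ⟨p⟩ := hcoconn.preconnected x v0
    obtain ⟨a, haU, b, hbU, hab⟩ := walk_cross Gᶜ U p hxU hv0
    rw [compl_adj] at hab
    rcases hclass b hbU with hall | hnone
    · exact absurd (hall a haU).symm hab.2
    · exact ⟨b, hbU, hnone⟩
  -- two nonadjacent vertices of U have no common neighbour inside U
  have noCommon : ∀ u ∈ U, ∀ u' ∈ U, u ≠ u' → ¬ G.Adj u u' →
      ∀ w ∈ U, ¬ (G.Adj w u ∧ G.Adj w u') := by
    intro u huU u' hu'U hne hnadj w hwU ⟨h1, h2⟩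
    exact diamond_apply hdiamond (ht w hwU).symm h1 h2 (ht u huU) (ht u' hu'U) hnadj hne
  -- every vertex of U relates to each edge of U
  have endp : ∀ a ∈ U, ∀ b ∈ U, ∀ c ∈ U, G.Adj a b →
      c = a ∨ c = b ∨ G.Adj c a ∨ G.Adj c b := by
    intro a haU b hbU c hcU hab
    by_contra h
    push_neg at h
    obtain ⟨h1, h2, h3, h4⟩ := h
    exact k2u2k1_apply hcodiamond hab (fun h => h3 h.symm) (fun h => hs a haU h.symm)
      (fun h => h4 h.symm) (fun h => hs b hbU h.symm) (fun h => hs c hcU h.symm)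
      (fun h => h1 h.symm) (fun h => hsU (h ▸ haU)) (fun h => h2 h.symm)
      (fun h => hsU (h ▸ hbU)) (fun h => hsU (h ▸ hcU))
  -- U is a clique
  have key : ∀ u ∈ U, ∀ u' ∈ U, u ≠ u' → G.Adj u u' := by
    intro u huU u' hu'U hne
    by_contra hnadj
    have H : ∀ a ∈ U, ¬ G.Adj u a := by
      intro a haU hua
      rcases endp u huU a haU u' hu'U hua with h | h | h | h
      · exact hne h.symm
      · exact hnadj (by rw [h]; exact hua)
      · exact hnadj h.symm
      · exact noCommon u huU u' hu'U hne hnadj a haU ⟨hua.symm, h.symm⟩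
    rcases endp x hxU y hyU u huU hxy with h | h | h | h
    · exact H y hyU (by rw [h]; exact hxy)
    · exact H x hxU (by rw [h]; exact hxy.symm)
    · exact H x hxU h
    · exact H y hyU h
  -- the bipartition of the complement
  refine ⟨{v | v ∈ U ∨ ∀ u ∈ U, G.Adj v u}, ?_⟩
  intro u v huv
  rw [compl_adj] at huv
  obtain ⟨hne, hnadj⟩ := huv
  by_cases hu : u ∈ {v | v ∈ U ∨ ∀ u ∈ U, G.Adj v u} <;>
    by_cases hv : v ∈ {v | v ∈ U ∨ ∀ u ∈ U, G.Adj v u}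
  · -- both in A: they must be adjacent, contradiction
    exfalso
    apply hnadj
    rcases hu with hu | hu <;> rcases hv with hv | hv
    · exact key u hu v hv hne
    · exact (hv u hu).symm
    · exact hu v hv
    · -- both adjacent to all of U: both outside U (else self-adjacent), T-clique
      have hu' : u ∉ U := fun h => G.irrefl (hu u h)
      have hv' : v ∉ U := fun h => G.irrefl (hv v h)
      by_contra hn
      exact diamond_apply hdiamond hxy (hu x hxU).symm (hv x hxU).symm
        (hu y hyU).symm (hv y hyU).symm hn hne
  · exact Or.inl ⟨hu, hv⟩
  · exact Or.inr ⟨hu, hv⟩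
  · -- both outside A: both in S, S is a clique, contradiction
    exfalso
    simp only [Set.mem_setOf_eq, not_or] at hu hv
    obtain ⟨hu1, hu2⟩ := hu
    obtain ⟨hv1, hv2⟩ := hv
    have hus : ∀ w ∈ U, ¬ G.Adj u w := by
      rcases hclass u hu1 with h | h
      · exact absurd h hu2
      · exact h
    have hvs : ∀ w ∈ U, ¬ G.Adj v w := by
      rcases hclass v hv1 with h | h
      · exact absurd h hv2
      · exact h
    exact k2u2k1_apply hcodiamond hxy (fun h => hus x hxU h.symm)
      (fun h => hvs x hxU h.symm) (fun h => hus y hyU h.symm)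
      (fun h => hvs y hyU h.symm) hnadj
      (fun h => hu1 (h ▸ hxU)) (fun h => hv1 (h ▸ hxU))
      (fun h => hu1 (h ▸ hyU)) (fun h => hv1 (h ▸ hyU)) hne
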